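/- arXiv:1310.3889 — 2 statements merged into one kernel-verified Lean document; each statement's English description precedes it below -/
import Mathlib

section
/- For every t ∈ (0,1): ∫₀^∞ t^{−3/2} · y² · exp(−y²/(2t)) · erf( y/√(2(1−t)) ) dy = √(2/π) · ( √(t(1−t)) + arcsin √t ), where erf(x) := (2/√π) ∫₀^x exp(−u²) du. (This is the first moment of Brownian meander of length 1 at time t, E B_t^{me}, computed from the meander's marginal density t^{−3/2} x e^{−x²/(2t)} erf(x/√(2(1−t))).) -/
open MeasureTheory Real Set Filter

lemma gauss3_integrable {k : ℝ} (hk : 0 < k) :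
    IntegrableOn (fun y : ℝ => y ^ 3 * Real.exp (-(k * y ^ 2))) (Set.Ioi 0) := by
    have := integrableOn_rpow_mul_exp_neg_mul_sq hk (s := 3) (by norm_num)
    apply this.congr_fun ?_ measurableSet_Ioi
    intro x hx
    simp only [neg_mul]
    rw [show (3:ℝ) = ((3:ℕ):ℝ) by norm_num, Real.rpow_natCast]

lemma gauss3 {k : ℝ} (hk : 0 < k) :
    ∫ y in Set.Ioi (0:ℝ), y ^ 3 * Real.exp (-(k * y ^ 2)) = 1 / (2 * k ^ 2) := by
  have hint := gauss3_integrable hk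
  have hderiv : ∀ y ∈ Set.Ici (0:ℝ),
      HasDerivAt (fun y : ℝ => -(y ^ 2 / (2 * k) + 1 / (2 * k ^ 2)) * Real.exp (-(k * y ^ 2)))
        (y ^ 3 * Real.exp (-(k * y ^ 2))) y := by
    intro y _
    have h1 : HasDerivAt (fun y : ℝ => -(y ^ 2 / (2 * k) + 1 / (2 * k ^ 2)))
        (-(2 * y / (2 * k))) y := by
      have := ((hasDerivAt_pow 2 y).div_const (2 * k)).add_const (1 / (2 * k ^ 2))
      refine this.neg.congr_deriv ?_
      simp
    have h2 : HasDerivAt (fun y : ℝ => Real.exp (-(k * y ^ 2)))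
        (Real.exp (-(k * y ^ 2)) * (-(k * (2 * y)))) y := by
      have : HasDerivAt (fun y : ℝ => -(k * y ^ 2)) (-(k * (2 * y))) y := by
        refine ((hasDerivAt_pow 2 y).const_mul k).neg.congr_deriv ?_
        simp
      exact (Real.hasDerivAt_exp _).comp y this
    have := h1.mul h2
    refine this.congr_deriv ?_
    field_simp
    ring
  have htend : Tendsto (fun y : ℝ => -(y ^ 2 / (2 * k) + 1 / (2 * k ^ 2)) * Real.exp (-(k * y ^ 2)))
      atTop (nhds 0) := by
    have h1 : Tendsto (fun u : ℝ => u * Real.exp (-u)) atTop (nhds 0) := by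
      simpa using Real.tendsto_pow_mul_exp_neg_atTop_nhds_zero 1
    have h2 : Tendsto (fun y : ℝ => k * y ^ 2) atTop atTop :=
      (tendsto_pow_atTop (by norm_num)).const_mul_atTop hk
    have h3 : Tendsto (fun y : ℝ => (k * y ^ 2) * Real.exp (-(k * y ^ 2))) atTop (nhds 0) :=
      h1.comp h2
    have h4 : Tendsto (fun y : ℝ => Real.exp (-(k * y ^ 2))) atTop (nhds 0) :=
      (Real.tendsto_exp_neg_atTop_nhds_zero).comp h2
    have := ((h3.const_mul (-(1/(2*k^2)))).sub (h4.const_mul (1/(2*k^2))))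
    simp only [mul_zero, sub_zero, zero_sub, neg_zero] at this
    convert this using 2 with y
    field_simp
    ring
  have := integral_Ioi_of_hasDerivAt_of_tendsto' hderiv hint htend
  rw [this]
  norm_num

lemma ftc_quartic {c : ℝ} (b : ℝ) (hc : 0 < c) :
    ∫ s in (0:ℝ)..b, ((c + s ^ 2) ^ 2)⁻¹ =
      (2 * c)⁻¹ * (b / (c + b ^ 2) + (Real.sqrt c)⁻¹ * Real.arctan (b / Real.sqrt c)) := by
  have hsc : (0:ℝ) < Real.sqrt c := Real.sqrt_pos.2 hc
  have hcs : Real.sqrt c ^ 2 = c := Real.sq_sqrt hc.le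
  have key : ∀ s : ℝ, HasDerivAt
      (fun s : ℝ => (2 * c)⁻¹ * (s / (c + s ^ 2) + (Real.sqrt c)⁻¹ * Real.arctan (s / Real.sqrt c)))
      (((c + s ^ 2) ^ 2)⁻¹) s := by
    intro s
    have hne : c + s ^ 2 ≠ 0 := by positivity
    have h1 : HasDerivAt (fun s : ℝ => s / (c + s ^ 2))
        ((1 * (c + s ^ 2) - s * (2 * s)) / (c + s ^ 2) ^ 2) s := by
      have hd : HasDerivAt (fun s : ℝ => c + s ^ 2) (2 * s) s := by
        simpa using (hasDerivAt_pow 2 s).const_add c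
      exact (hasDerivAt_id s).div hd hne
    have h2 : HasDerivAt (fun s : ℝ => Real.arctan (s / Real.sqrt c))
        ((1 / (1 + (s / Real.sqrt c) ^ 2)) * (Real.sqrt c)⁻¹) s := by
      have hd : HasDerivAt (fun s : ℝ => s / Real.sqrt c) ((Real.sqrt c)⁻¹) s := by
        simpa [div_eq_mul_inv] using (hasDerivAt_id s).div_const (Real.sqrt c)
      exact (Real.hasDerivAt_arctan (s / Real.sqrt c)).comp s hd
    have := ((h1.add (h2.const_mul (Real.sqrt c)⁻¹)).const_mul ((2 * c)⁻¹))
    refine this.congr_deriv ?_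
    have h3 : 1 + (s / Real.sqrt c) ^ 2 = (c + s ^ 2) / c := by
      rw [div_pow, hcs]
      field_simp
    rw [h3]
    field_simp
    rw [hcs]
    ring
  have hcont : IntervalIntegrable (fun s : ℝ => ((c + s ^ 2) ^ 2)⁻¹) volume 0 b := by
    apply Continuous.intervalIntegrable
    have : ∀ s : ℝ, (c + s ^ 2) ^ 2 ≠ 0 := fun s => by positivity
    exact (continuous_const.add (continuous_pow 2)).pow 2 |>.inv₀ this
  have := intervalIntegral.integral_eq_sub_of_hasDerivAt (fun s _ => key s) hcont
  rw [this]
  simp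

/-- The error function `erf(x) = (2/√π) ∫₀^x e^{−u²} du`. -/
noncomputable def erf (x : ℝ) : ℝ :=
  2 / Real.sqrt π * ∫ u in (0 : ℝ)..x, Real.exp (-u ^ 2)

/-- the first moment of Brownian meander of length 1 at time `t`,
computed from its marginal density:
`∫₀^∞ t^{−3/2} y² e^{−y²/(2t)} erf(y/√(2(1−t))) dy = √(2/π)(√(t(1−t)) + arcsin √t)`. -/
theorem meander_first_moment (t : ℝ) (ht : t ∈ Set.Ioo (0 : ℝ) 1) :
    ∫ y in Set.Ioi (0 : ℝ),
        t ^ (-(3 : ℝ) / 2) * y ^ 2 * Real.exp (-y ^ 2 / (2 * t)) *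
          erf (y / Real.sqrt (2 * (1 - t))) =
      Real.sqrt (2 / π) * (Real.sqrt (t * (1 - t)) + Real.arcsin (Real.sqrt t)) := by
  obtain ⟨ht0, ht1⟩ := ht
  have h1t : (0:ℝ) < 1 - t := by linarith
  set b : ℝ := (Real.sqrt (2 * (1 - t)))⁻¹ with hb_def
  set c : ℝ := (2 * t)⁻¹ with hc_def
  have hb : 0 < b := by positivity
  have hc : 0 < c := by positivity
  set K : ℝ := 2 / Real.sqrt π * t ^ (-(3 : ℝ) / 2) with hK_def
  have hK : 0 < K := by
    have := Real.pi_pos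
    positivity
  set g : ℝ → ℝ → ℝ := fun y s => K * (y ^ 3 * Real.exp (-((c + s ^ 2) * y ^ 2))) with hg_def
  -- Step 1: pointwise rewrite of the integrand
  have step1 : ∀ y ∈ Set.Ioi (0:ℝ),
      t ^ (-(3 : ℝ) / 2) * y ^ 2 * Real.exp (-y ^ 2 / (2 * t)) *
          erf (y / Real.sqrt (2 * (1 - t))) =
        ∫ s in Set.Ioc (0:ℝ) b, g y s := by
    intro y hy
    have hy0 : (0:ℝ) < y := hy
    -- substitution u = s * y inside erf
    have hsub : (∫ u in (0:ℝ)..(y * b), Real.exp (-u ^ 2)) =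
        y * ∫ s in (0:ℝ)..b, Real.exp (-(s * y) ^ 2) := by
      have := intervalIntegral.smul_integral_comp_mul_right
        (a := (0:ℝ)) (b := b) (fun u => Real.exp (-u ^ 2)) y
      simp only [zero_mul, smul_eq_mul] at this
      rw [mul_comm y b]
      exact this.symm
    have herf : erf (y / Real.sqrt (2 * (1 - t))) =
        2 / Real.sqrt π * (y * ∫ s in (0:ℝ)..b, Real.exp (-(s * y) ^ 2)) := by
      rw [erf, div_eq_mul_inv y, ← hb_def, hsub]
    rw [herf, intervalIntegral.integral_of_le hb.le,
      show ∀ I : ℝ, t ^ (-(3:ℝ) / 2) * y ^ 2 * Real.exp (-y ^ 2 / (2 * t)) *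
          (2 / Real.sqrt π * (y * I)) =
          (t ^ (-(3:ℝ) / 2) * y ^ 2 * Real.exp (-y ^ 2 / (2 * t)) * (2 / Real.sqrt π) * y) * I
        from fun I => by ring,
      ← MeasureTheory.integral_const_mul]
    apply setIntegral_congr_fun measurableSet_Ioc
    intro s hs
    have : Real.exp (-y ^ 2 / (2 * t)) * Real.exp (-(s * y) ^ 2)
        = Real.exp (-((c + s ^ 2) * y ^ 2)) := by
      rw [← Real.exp_add]
      congr 1
      rw [hc_def]
      field_simp
      ring
    simp only [hg_def, hK_def]
    rw [← this]
    ring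
  rw [setIntegral_congr_fun measurableSet_Ioi step1]
  -- Step 2: integrability on the product, then swap
  have hintg : Integrable (Function.uncurry g)
      ((volume.restrict (Set.Ioi (0:ℝ))).prod (volume.restrict (Set.Ioc (0:ℝ) b))) := by
    have hdom : Integrable
        (fun p : ℝ × ℝ => (K * (p.1 ^ 3 * Real.exp (-(c * p.1 ^ 2)))) * (1:ℝ))
        ((volume.restrict (Set.Ioi (0:ℝ))).prod (volume.restrict (Set.Ioc (0:ℝ) b))) := by
      exact Integrable.mul_prod ((gauss3_integrable hc).const_mul K)
        ((integrableOn_const_iff (by simp)).mpr (Or.inr measure_Ioc_lt_top))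
    apply hdom.mono'
    · apply Continuous.aestronglyMeasurable
      simp only [hg_def, Function.uncurry]
      fun_prop
    · rw [Measure.prod_restrict]
      filter_upwards [ae_restrict_mem (measurableSet_Ioi.prod measurableSet_Ioc)] with p hp
      obtain ⟨hp1, hp2⟩ := hp
      have hy0 : (0:ℝ) < p.1 := hp1
      simp only [hg_def, Function.uncurry]
      rw [Real.norm_eq_abs, abs_of_nonneg (by positivity), mul_one]
      have : Real.exp (-((c + p.2 ^ 2) * p.1 ^ 2)) ≤ Real.exp (-(c * p.1 ^ 2)) := by
        apply Real.exp_le_exp.2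
        nlinarith [sq_nonneg p.2, sq_nonneg p.1]
      gcongr
  rw [MeasureTheory.integral_integral_swap hintg]
  -- Step 3: inner Gaussian integral
  have step3 : ∀ s ∈ Set.Ioc (0:ℝ) b,
      (∫ y in Set.Ioi (0:ℝ), g y s) = K * (2 * (c + s ^ 2) ^ 2)⁻¹ := by
    intro s _
    have hcs : 0 < c + s ^ 2 := by positivity
    simp only [hg_def]
    rw [MeasureTheory.integral_const_mul, gauss3 hcs]
    rw [one_div]
  rw [setIntegral_congr_fun measurableSet_Ioc step3]
  -- Step 4: use FTC
  have step4 : (∫ s in Set.Ioc (0:ℝ) b, K * (2 * (c + s ^ 2) ^ 2)⁻¹)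
      = K * (1/2) * ((2 * c)⁻¹ * (b / (c + b ^ 2) + (Real.sqrt c)⁻¹ * Real.arctan (b / Real.sqrt c))) := by
    rw [← intervalIntegral.integral_of_le hb.le, ← ftc_quartic b hc,
      ← intervalIntegral.integral_const_mul]
    apply intervalIntegral.integral_congr
    intro s _
    simp only [mul_inv]
    ring
  rw [step4]
  clear_value g
  clear hintg step1 step3 step4 hg_def g
  clear_value b c K
  -- Step 5: final algebra
  have hscv : Real.sqrt c = (Real.sqrt (2 * t))⁻¹ := by rw [hc_def, Real.sqrt_inv]
  have hscpos : 0 < Real.sqrt c := Real.sqrt_pos.2 hc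
  have hsqrt2t : (Real.sqrt c)⁻¹ = Real.sqrt 2 * Real.sqrt t := by
    rw [hscv, inv_inv, Real.sqrt_mul (by norm_num)]
  have harg : b / Real.sqrt c = Real.sqrt t / Real.sqrt (1 - t) := by
    rw [hscv, hb_def, Real.sqrt_mul (by norm_num : (0:ℝ) ≤ 2),
      Real.sqrt_mul (by norm_num : (0:ℝ) ≤ 2) t]
    have h2 : Real.sqrt 2 ≠ 0 := by positivity
    have h1t' : Real.sqrt (1 - t) ≠ 0 := by positivity
    field_simp
  have harctan : Real.arctan (b / Real.sqrt c) = Real.arcsin (Real.sqrt t) := by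
    rw [harg, Real.arcsin_eq_arctan (by
      constructor
      · have : (0:ℝ) ≤ Real.sqrt t := Real.sqrt_nonneg t
        linarith
      · rw [← Real.sqrt_one]
        exact Real.sqrt_lt_sqrt ht0.le ht1)]
    rw [Real.sq_sqrt ht0.le]
  have hb2 : b ^ 2 = (2 * (1 - t))⁻¹ := by
    rw [hb_def, inv_pow, Real.sq_sqrt (by positivity)]
  have hcb : c + b ^ 2 = (2 * t * (1 - t))⁻¹ := by
    rw [hc_def, hb2]
    field_simp
    ring
  have h2c : (2 * c)⁻¹ = t := by rw [hc_def]; field_simp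
  have hrt : Real.sqrt (t * (1 - t)) > 0 := by positivity
  have hrt2 : Real.sqrt (t * (1 - t)) ^ 2 = t * (1 - t) := Real.sq_sqrt (by positivity)
  have F2 : Real.sqrt c * (b / (c + b ^ 2)) = Real.sqrt (t * (1 - t)) := by
    rw [hcb, hscv, hb_def]
    have h4 : Real.sqrt (2 * t) * Real.sqrt (2 * (1 - t)) = 2 * Real.sqrt (t * (1 - t)) := by
      rw [← Real.sqrt_mul (by positivity), show 2 * t * (2 * (1 - t)) = 4 * (t * (1 - t)) by ring,
        Real.sqrt_mul (by norm_num), show (4:ℝ) = 2 ^ 2 by norm_num,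
        Real.sqrt_sq (by norm_num : (0:ℝ) ≤ 2)]
    have hA : Real.sqrt (2 * t) ≠ 0 := by positivity
    have hB : Real.sqrt (2 * (1 - t)) ≠ 0 := by positivity
    rw [show (Real.sqrt (2*t))⁻¹ * ((Real.sqrt (2*(1-t)))⁻¹ / (2 * t * (1 - t))⁻¹)
        = (2 * t * (1 - t)) / (Real.sqrt (2*t) * Real.sqrt (2*(1-t))) by
      field_simp, h4]
    rw [div_eq_iff (by positivity)]
    nlinarith [hrt2]
  have ht32 : t ^ (-(3:ℝ)/2) = (t * Real.sqrt t)⁻¹ := by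
    rw [show -(3:ℝ)/2 = -(3/2) by ring, Real.rpow_neg ht0.le]
    congr 1
    rw [show (3:ℝ)/2 = 1 + 1/2 by norm_num, Real.rpow_add ht0, Real.rpow_one,
      ← Real.sqrt_eq_rpow]
  have hst : Real.sqrt t > 0 := Real.sqrt_pos.2 ht0
  have hsp : Real.sqrt π > 0 := Real.sqrt_pos.2 Real.pi_pos
  have F1 : K * (1/2) * (2 * c)⁻¹ * (Real.sqrt c)⁻¹ = Real.sqrt (2 / π) := by
    rw [hK_def, ht32, h2c, hsqrt2t, Real.sqrt_div' 2 (le_of_lt Real.pi_pos)]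
    field_simp
  rw [harctan, show K * (1/2) * ((2 * c)⁻¹ * (b / (c + b ^ 2) + (Real.sqrt c)⁻¹ *
      Real.arcsin (Real.sqrt t)))
      = (K * (1/2) * (2 * c)⁻¹ * (Real.sqrt c)⁻¹) *
        (Real.sqrt c * (b / (c + b ^ 2)) + Real.arcsin (Real.sqrt t)) by
    field_simp, F1, F2]
end

section
/- For every t ∈ (0,1): √t · ∫_t^1 ( √(a−t) / (a √(1−a)) ) da + ∫_t^1 ( arcsin √(t/a) / √(1−a) ) da = π · ( √(1−t) + 2√t − t − 1 ). -/
open MeasureTheory Real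

theorem VT_L2 (t a : ℝ) (ht0 : 0 < t) (ht1 : t < 1) (hta : t < a) (ha1 : a < 1) :
    HasDerivAt (fun a => Real.arcsin ((2*a - 1 - t)/(1-t)))
      (1/(Real.sqrt (1-a) * Real.sqrt (a-t))) a := by
  have h1t : (0:ℝ) < 1 - t := by linarith
  have h1a : (0:ℝ) < 1 - a := by linarith
  have hat : (0:ℝ) < a - t := by linarith
  have hinner : HasDerivAt (fun x : ℝ => (2*x - 1 - t)/(1-t)) (2/(1-t)) a := by
    have h := (((hasDerivAt_id a).const_mul 2).sub_const 1).sub_const t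
    simpa using h.div_const (1-t)
  have hu1 : (2*a - 1 - t)/(1-t) ≠ 1 := by
    intro h; rw [div_eq_one_iff_eq h1t.ne'] at h; linarith
  have hu2 : (2*a - 1 - t)/(1-t) ≠ -1 := by
    intro h; rw [div_eq_iff h1t.ne'] at h; linarith
  have := (Real.hasDerivAt_arcsin hu2 hu1).comp a hinner
  refine this.congr_deriv (Eq.symm ?_)
  have key : 1 - ((2*a - 1 - t)/(1-t))^2 = (2 * Real.sqrt (1-a) * Real.sqrt (a-t) / (1-t))^2 := by
    rw [div_pow, div_pow, mul_pow, mul_pow, Real.sq_sqrt h1a.le, Real.sq_sqrt hat.le]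
    field_simp
    ring
  rw [key, Real.sqrt_sq (by positivity)]
  have s1 := Real.sqrt_pos.mpr h1a
  have s2 := Real.sqrt_pos.mpr hat
  field_simp

theorem VT_L3 (t a : ℝ) (ht0 : 0 < t) (ht1 : t < 1) (hta : t < a) (ha1 : a < 1) :
    HasDerivAt (fun a => Real.arcsin (((1+t)*a - 2*t)/((1-t)*a)))
      (Real.sqrt t/(a * Real.sqrt (1-a) * Real.sqrt (a-t))) a := by
  have h1t : (0:ℝ) < 1 - t := by linarith
  have h1a : (0:ℝ) < 1 - a := by linarith
  have hat : (0:ℝ) < a - t := by linarith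
  have ha0 : (0:ℝ) < a := lt_trans ht0 hta
  have hinner : HasDerivAt (fun x : ℝ => ((1+t)*x - 2*t)/((1-t)*x))
      (2*t/((1-t)*a^2)) a := by
    have hn : HasDerivAt (fun x : ℝ => (1+t)*x - 2*t) (1+t) a := by
      simpa using ((hasDerivAt_id a).const_mul (1+t)).sub_const (2*t)
    have hd : HasDerivAt (fun x : ℝ => (1-t)*x) (1-t) a := by
      simpa using (hasDerivAt_id a).const_mul (1-t)
    have := hn.div hd (by positivity)
    refine this.congr_deriv (Eq.symm ?_)
    field_simp
    ring
  set v := ((1+t)*a - 2*t)/((1-t)*a) with hv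
  have key : 1 - v^2 = (2 * Real.sqrt t * Real.sqrt (1-a) * Real.sqrt (a-t) / ((1-t)*a))^2 := by
    rw [hv, div_pow, div_pow, mul_pow, mul_pow, mul_pow, mul_pow, pow_two (2:ℝ),
      Real.sq_sqrt h1a.le, Real.sq_sqrt hat.le, Real.sq_sqrt ht0.le]
    field_simp
    ring
  have hvpos : 0 < 1 - v^2 := by rw [key]; positivity
  have hu1 : v ≠ 1 := by intro h; rw [h] at hvpos; norm_num at hvpos
  have hu2 : v ≠ -1 := by intro h; rw [h] at hvpos; norm_num at hvpos
  have := (Real.hasDerivAt_arcsin hu2 hu1).comp a hinner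
  refine this.congr_deriv (Eq.symm ?_)
  rw [key, Real.sqrt_sq (by positivity)]
  have s1 := Real.sqrt_pos.mpr h1a
  have s2 := Real.sqrt_pos.mpr hat
  have s3 := Real.sqrt_pos.mpr ht0
  field_simp
  ring_nf
  rw [Real.sq_sqrt ht0.le]

theorem VT_Larc (t a : ℝ) (ht0 : 0 < t) (ht1 : t < 1) (hta : t < a) (ha1 : a < 1) :
    HasDerivAt (fun a => Real.arcsin (Real.sqrt (t/a)))
      (-(Real.sqrt t/(2 * a * Real.sqrt (a-t)))) a := by
  have ha0 : (0:ℝ) < a := lt_trans ht0 hta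
  have hat : (0:ℝ) < a - t := by linarith
  have hta0 : (0:ℝ) < t/a := by positivity
  have hinner1 : HasDerivAt (fun x : ℝ => t/x) (-(t/a^2)) a := by
    have := (hasDerivAt_inv ha0.ne').const_mul t
    refine this.congr_deriv (Eq.symm ?_)
    field_simp
  have hinner2 : HasDerivAt (fun x : ℝ => Real.sqrt (t/x))
      (1/(2*Real.sqrt (t/a)) * -(t/a^2)) a :=
    (Real.hasDerivAt_sqrt hta0.ne').comp a hinner1
  have hx1 : Real.sqrt (t/a) ≠ 1 := by
    have : t/a < 1 := (div_lt_one ha0).mpr hta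
    have h2 : Real.sqrt (t/a) < 1 := by
      rw [show (1:ℝ) = Real.sqrt 1 by simp]
      exact Real.sqrt_lt_sqrt hta0.le this
    exact h2.ne
  have hx2 : Real.sqrt (t/a) ≠ -1 := by
    have := Real.sqrt_nonneg (t/a); intro h; rw [h] at this; linarith
  have := (Real.hasDerivAt_arcsin hx2 hx1).comp a hinner2
  refine this.congr_deriv (Eq.symm ?_)
  rw [Real.sq_sqrt hta0.le, show 1 - t/a = (a-t)/a by field_simp,
    Real.sqrt_div hat.le, Real.sqrt_div ht0.le]
  have sa := Real.sqrt_pos.mpr ha0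
  have sat := Real.sqrt_pos.mpr hat
  have st := Real.sqrt_pos.mpr ht0
  field_simp
  ring_nf
  rw [Real.sq_sqrt ht0.le, Real.sq_sqrt ha0.le]

/-- derivative of the full antiderivative -/
theorem VT_deriv (t a : ℝ) (ht0 : 0 < t) (ht1 : t < 1) (hta : t < a) (ha1 : a < 1) :
    HasDerivAt (fun a => -2 * (Real.sqrt (1-a) * Real.arcsin (Real.sqrt (t/a)))
        + 2 * Real.sqrt t * Real.arcsin ((2*a - 1 - t)/(1-t))
        - (1+t) * Real.arcsin (((1+t)*a - 2*t)/((1-t)*a)))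
      (Real.sqrt t * (Real.sqrt (a - t) / (a * Real.sqrt (1 - a)))
        + Real.arcsin (Real.sqrt (t / a)) / Real.sqrt (1 - a)) a := by
  have h1a : (0:ℝ) < 1 - a := by linarith
  have hat : (0:ℝ) < a - t := by linarith
  have ha0 : (0:ℝ) < a := lt_trans ht0 hta
  have hsq : HasDerivAt (fun x : ℝ => Real.sqrt (1-x)) (1/(2*Real.sqrt (1-a)) * (-1)) a := by
    have h1 : HasDerivAt (fun x : ℝ => 1 - x) (-1) a := by
      simpa using (hasDerivAt_id a).const_sub 1
    exact (Real.hasDerivAt_sqrt h1a.ne').comp a h1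
  have hprod := (hsq.mul (VT_Larc t a ht0 ht1 hta ha1)).const_mul (-2 : ℝ)
  have hB := (VT_L2 t a ht0 ht1 hta ha1).const_mul (2 * Real.sqrt t)
  have hC := (VT_L3 t a ht0 ht1 hta ha1).const_mul (1+t)
  have := (hprod.add hB).sub hC
  refine this.congr_deriv (Eq.symm ?_)
  have s1 := Real.sqrt_pos.mpr h1a
  have sat := Real.sqrt_pos.mpr hat
  have st := Real.sqrt_pos.mpr ht0
  have e1 : Real.sqrt (1-a)^2 = 1-a := Real.sq_sqrt h1a.le
  have e2 : Real.sqrt (a-t)^2 = a-t := Real.sq_sqrt hat.le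
  field_simp
  linear_combination (Real.sqrt t) * e2
    - (Real.sqrt t) * e1

/-- the definite-integral identity
`√t ∫_t^1 √(a−t)/(a√(1−a)) da + ∫_t^1 arcsin√(t/a)/√(1−a) da
  = π(√(1−t) + 2√t − t − 1)` for `t ∈ (0,1)`. -/
theorem vervaat_expectation_integrals (t : ℝ) (ht : t ∈ Set.Ioo (0 : ℝ) 1) :
    Real.sqrt t * (∫ a in Set.Ioo t 1, Real.sqrt (a - t) / (a * Real.sqrt (1 - a))) +
      (∫ a in Set.Ioo t 1, Real.arcsin (Real.sqrt (t / a)) / Real.sqrt (1 - a)) =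
      π * (Real.sqrt (1 - t) + 2 * Real.sqrt t - t - 1) := by
  obtain ⟨ht0, ht1⟩ := ht
  have h1t : (0:ℝ) < 1 - t := by linarith
  -- integrability of the dominating function
  have hw : IntegrableOn (fun a : ℝ => ((1:ℝ)-a) ^ (-(1/2) : ℝ)) (Set.Ioo t 1) volume := by
    have h0 : IntervalIntegrable (fun x : ℝ => x ^ (-(1/2) : ℝ)) volume 0 (1-t) :=
      intervalIntegral.intervalIntegrable_rpow' (by norm_num)
    have h1 := h0.comp_sub_left 1
    simp only [sub_zero, sub_sub_cancel] at h1
    exact (intervalIntegrable_iff_integrableOn_Ioo_of_le ht1.le).mp h1.symm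
  have hub : ∀ a ∈ Set.Ioo t 1, ((1:ℝ)-a) ^ (-(1/2) : ℝ) = 1 / Real.sqrt (1-a) := by
    intro a ha
    rw [Real.rpow_neg (by linarith [ha.2] : (0:ℝ) ≤ 1 - a), ← Real.sqrt_eq_rpow, one_div]
  -- integrability of f1
  have hmf1 : AEStronglyMeasurable (fun a : ℝ => Real.sqrt (a - t) / (a * Real.sqrt (1 - a)))
      (volume.restrict (Set.Ioo t 1)) := by
    apply ContinuousOn.aestronglyMeasurable _ measurableSet_Ioo
    apply ContinuousOn.div
    · exact (continuous_sqrt.comp (continuous_id.sub continuous_const)).continuousOn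
    · exact (continuous_id.mul (continuous_sqrt.comp (continuous_const.sub continuous_id))).continuousOn
    · intro x hx
      have hx1 := hx.1; have hx2 := hx.2
      have h1 : (0:ℝ) < x := lt_trans ht0 hx1
      have h2 : (0:ℝ) < Real.sqrt (1-x) := Real.sqrt_pos.mpr (by linarith)
      positivity
  have hint1 : IntegrableOn (fun a : ℝ => Real.sqrt (a - t) / (a * Real.sqrt (1 - a)))
      (Set.Ioo t 1) volume := by
    apply Integrable.mono (hw.const_mul t⁻¹) hmf1
    rw [ae_restrict_iff' measurableSet_Ioo]
    filter_upwards with a ha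
    have ha1 := ha.1; have ha2 := ha.2
    have ha0 : (0:ℝ) < a := lt_trans ht0 ha1
    have hs1 : (0:ℝ) < Real.sqrt (1-a) := Real.sqrt_pos.mpr (by linarith)
    calc ‖Real.sqrt (a - t) / (a * Real.sqrt (1 - a))‖
        = Real.sqrt (a - t) / (a * Real.sqrt (1 - a)) := by
          rw [Real.norm_eq_abs, abs_of_nonneg (by positivity)]
      _ ≤ 1 / (t * Real.sqrt (1 - a)) := by
          apply div_le_div₀ zero_le_one ?_ (by positivity) ?_
          · calc Real.sqrt (a - t) ≤ Real.sqrt 1 := Real.sqrt_le_sqrt (by linarith)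
              _ = 1 := Real.sqrt_one
          · have := hs1.le
            nlinarith
      _ = ‖t⁻¹ * ((1:ℝ)-a) ^ (-(1/2) : ℝ)‖ := by
          rw [Real.norm_eq_abs, hub a ha, abs_of_nonneg (by positivity)]
          rw [mul_one_div, one_div]
          rw [mul_inv, div_eq_mul_inv]
  -- integrability of f2
  have hmf2 : AEStronglyMeasurable
      (fun a : ℝ => Real.arcsin (Real.sqrt (t/a)) / Real.sqrt (1 - a))
      (volume.restrict (Set.Ioo t 1)) := by
    apply ContinuousOn.aestronglyMeasurable _ measurableSet_Ioo
    apply ContinuousOn.div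
    · apply Real.continuous_arcsin.comp_continuousOn
      apply ContinuousOn.sqrt
      exact continuousOn_const.div continuousOn_id
        (fun x hx => (lt_trans ht0 hx.1).ne')
    · exact (continuous_sqrt.comp (continuous_const.sub continuous_id)).continuousOn
    · intro x hx
      exact (Real.sqrt_pos.mpr (by linarith [hx.2])).ne'
  have hint2 : IntegrableOn (fun a : ℝ => Real.arcsin (Real.sqrt (t/a)) / Real.sqrt (1 - a))
      (Set.Ioo t 1) volume := by
    apply Integrable.mono (hw.const_mul (π/2)) hmf2
    rw [ae_restrict_iff' measurableSet_Ioo]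
    filter_upwards with a ha
    have ha1 := ha.1; have ha2 := ha.2
    have hs1 : (0:ℝ) < Real.sqrt (1-a) := Real.sqrt_pos.mpr (by linarith)
    have harc : |Real.arcsin (Real.sqrt (t/a))| ≤ π/2 :=
      abs_le.mpr ⟨by simpa using Real.neg_pi_div_two_le_arcsin _, Real.arcsin_le_pi_div_two _⟩
    calc ‖Real.arcsin (Real.sqrt (t/a)) / Real.sqrt (1 - a)‖
        = |Real.arcsin (Real.sqrt (t/a))| / Real.sqrt (1 - a) := by
          rw [Real.norm_eq_abs, abs_div, abs_of_nonneg hs1.le]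
      _ ≤ (π/2) / Real.sqrt (1 - a) := by gcongr
      _ = ‖(π/2) * ((1:ℝ)-a) ^ (-(1/2) : ℝ)‖ := by
          rw [Real.norm_eq_abs, hub a ha, abs_of_nonneg (by positivity), mul_one_div]
  -- continuity of antiderivative on Icc
  set G : ℝ → ℝ := fun a => -2 * (Real.sqrt (1-a) * Real.arcsin (Real.sqrt (t/a)))
        + 2 * Real.sqrt t * Real.arcsin ((2*a - 1 - t)/(1-t))
        - (1+t) * Real.arcsin (((1+t)*a - 2*t)/((1-t)*a)) with hGdef
  have hne0 : ∀ x ∈ Set.Icc t 1, x ≠ 0 := fun x hx => (lt_of_lt_of_le ht0 hx.1).ne'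
  have hcont : ContinuousOn G (Set.Icc t 1) := by
    apply ContinuousOn.sub
    apply ContinuousOn.add
    · apply ContinuousOn.mul continuousOn_const
      apply ContinuousOn.mul
      · exact (continuous_sqrt.comp (continuous_const.sub continuous_id)).continuousOn
      · apply Real.continuous_arcsin.comp_continuousOn
        apply ContinuousOn.sqrt
        exact continuousOn_const.div continuousOn_id hne0
    · apply ContinuousOn.mul continuousOn_const
      apply Real.continuous_arcsin.comp_continuousOn
      apply ContinuousOn.div
      · fun_prop
      · exact continuousOn_const
      · intro x _; exact h1t.ne'
    · apply ContinuousOn.mul continuousOn_const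
      apply Real.continuous_arcsin.comp_continuousOn
      apply ContinuousOn.div
      · fun_prop
      · fun_prop
      · intro x hx
        exact mul_ne_zero h1t.ne' (hne0 x hx)
  have hintg : IntervalIntegrable (fun a => Real.sqrt t * (Real.sqrt (a - t) / (a * Real.sqrt (1 - a)))
      + Real.arcsin (Real.sqrt (t / a)) / Real.sqrt (1 - a)) volume t 1 :=
    (intervalIntegrable_iff_integrableOn_Ioo_of_le ht1.le).mpr
      ((hint1.const_mul _).add hint2)
  have hval := intervalIntegral.integral_eq_sub_of_hasDerivAt_of_le ht1.le hcont
    (fun a ha => VT_deriv t a ht0 ht1 ha.1 ha.2) hintg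
  rw [intervalIntegral.integral_of_le ht1.le, integral_Ioc_eq_integral_Ioo] at hval
  have hcomb : Real.sqrt t * (∫ a in Set.Ioo t 1, Real.sqrt (a - t) / (a * Real.sqrt (1 - a))) +
      (∫ a in Set.Ioo t 1, Real.arcsin (Real.sqrt (t / a)) / Real.sqrt (1 - a))
      = ∫ a in Set.Ioo t 1, (Real.sqrt t * (Real.sqrt (a - t) / (a * Real.sqrt (1 - a)))
        + Real.arcsin (Real.sqrt (t / a)) / Real.sqrt (1 - a)) := by
    rw [← MeasureTheory.integral_const_mul, ← integral_add (hint1.const_mul _) hint2]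
  rw [hcomb, hval, hGdef]
  -- endpoint values
  have e1 : (2*(1:ℝ) - 1 - t)/(1-t) = 1 := by rw [div_eq_one_iff_eq h1t.ne']; ring
  have e2 : ((1+t)*(1:ℝ) - 2*t)/((1-t)*1) = 1 := by
    rw [div_eq_one_iff_eq (by simpa using h1t.ne')]; ring
  have e3 : Real.sqrt (t/t) = 1 := by rw [div_self ht0.ne', Real.sqrt_one]
  have e4 : (2*t - 1 - t)/(1-t) = -1 := by rw [div_eq_iff h1t.ne']; ring
  have e5 : ((1+t)*t - 2*t)/((1-t)*t) = -1 := by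
    rw [div_eq_iff (mul_ne_zero h1t.ne' ht0.ne')]; ring
  simp only [e1, e2, e3, e4, e5, Real.arcsin_one, Real.arcsin_neg_one, sub_self,
    Real.sqrt_zero, zero_mul, mul_zero, neg_zero, zero_add]
  ring
end
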